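/- (Theorem 1) For every block length n, every k with 1 <= k < n, and every delta > 0: P_err(n,k,delta) <= (1/(1-2^{-n})) P_delta + e^{-n (C_L - delta - R)}, where R = (k/n) ln 2. -/

import Mathlib

open scoped Classical BigOperators
open Finset

noncomputable section

/-- The Gaussian tail function `Q(s) = (1/sqrt(2*pi)) * int_s^infty e^{-x^2/2} dx`. -/
def gaussQ (s : ℝ) : ℝ :=
  (1 / Real.sqrt (2 * Real.pi)) * ∫ x in Set.Ioi s, Real.exp (-x ^ 2 / 2)

/-- The inverse of the Gaussian tail function (on `(0,1)`). -/
def gaussQinv : ℝ → ℝ := Function.invFun gaussQ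

/-- A binary-input memoryless channel with finite output alphabet `Y`:
transition probabilities `p x y = p(y|x)`, all positive, with rows summing to one. -/
structure BIMC (Y : Type) [Fintype Y] where
  p : ZMod 2 → Y → ℝ
  p_pos : ∀ x y, 0 < p x y
  p_sum : ∀ x, ∑ y, p x y = 1

namespace BIMC

variable {Y : Type} [Fintype Y] (W : BIMC Y)

/-- Output marginal under the uniform input. -/
def pY (y : Y) : ℝ := (W.p 0 y + W.p 1 y) / 2

/-- Posterior probability of input `x` given output `y`. -/
def pXY (x : ZMod 2) (y : Y) : ℝ := W.p x y / (W.p 0 y + W.p 1 y)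

/-- Conditional entropy `H(X|Y)` (in nats) for the uniform input. -/
def condEnt : ℝ :=
  ∑ y, W.pY y * ∑ x : ZMod 2, W.pXY x y * (-Real.log (W.pXY x y))

/-- The linear capacity `ln 2 - H(X|Y)`. -/
def CL : ℝ := Real.log 2 - W.condEnt

/-- The BIMC-L jar. -/
def jar (n : ℕ) (δ : ℝ) (yv : Fin n → Y) : Finset (Fin n → ZMod 2) :=
  Finset.univ.filter fun xv =>
    -(1 / (n : ℝ)) * ∑ i, Real.log (W.pXY (xv i) (yv i)) ≤ W.condEnt + δ

end BIMC

/-- The nonzero vectors in the null space of a parity-check matrix over `GF(2)`. -/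
def nullNZ (n k : ℕ) (H : Matrix (Fin (n - k)) (Fin n) (ZMod 2)) :
    Finset (Fin n → ZMod 2) :=
  Finset.univ.filter fun x => Matrix.mulVec H x = 0 ∧ x ≠ 0

namespace BIMC

variable {Y : Type} [Fintype Y] (W : BIMC Y)

/-- `P_delta`: the probability that `-(1/n) * sum_i ln p(X_i|Z_i) > H(X|Y) + δ`
where `(X_i, Z_i)` are i.i.d., `X_i` uniform on `{0,1}` and `Z_i ~ p(.|X_i)`. -/
def Pdelta (n : ℕ) (δ : ℝ) : ℝ :=
  ∑ xv : Fin n → ZMod 2, ∑ zv : Fin n → Y,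
    (∏ i, (1 / 2 : ℝ) * W.p (xv i) (zv i)) *
      (if W.condEnt + δ < -(1 / (n : ℝ)) * ∑ i, Real.log (W.pXY (xv i) (zv i))
        then 1 else 0)

/-- `P_err(n,k,δ)`: the probability, under the Gallager parity-check ensemble
(uniform parity-check matrix `H`; given `H`, the transmitted codeword is uniform over
the nonzero null-space vectors, which is the law of the lexicographically enumerated
codeword `X^n(q)` under a uniform message `q`) and the memoryless channel, that the
transmitted codeword falls outside the jar or some other codeword lies in the jar. -/
def Perr (n k : ℕ) (δ : ℝ) : ℝ :=
  ∑ H : Matrix (Fin (n - k)) (Fin n) (ZMod 2),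
    ∑ xv : Fin n → ZMod 2, ∑ yv : Fin n → Y,
      (1 / (2 : ℝ) ^ ((n - k) * n)) *
        ((if xv ∈ nullNZ n k H then 1 / ((nullNZ n k H).card : ℝ) else 0) *
          ((∏ i, W.p (xv i) (yv i)) *
            (if xv ∉ W.jar n δ yv ∨
                ∃ zv, zv ≠ xv ∧ Matrix.mulVec H zv = 0 ∧ zv ∈ W.jar n δ yv
              then 1 else 0)))

end BIMC

section JarAux
open Matrix


/-- sum over functions of a product = product of sums -/
lemma sum_fun_prod {ι α : Type*} [Fintype ι] [DecidableEq ι] [Fintype α] (F : ι → α → ℝ) :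
    ∑ f : ι → α, ∏ i, F i (f i) = ∏ i, ∑ a, F i a := by
  classical
  rw [Finset.prod_univ_sum]
  rw [Fintype.piFinset_univ]

lemma zmod2_add_self (a : ZMod 2) : a + a = 0 := by revert a; decide

lemma zmod2_eq_one {a : ZMod 2} (h : a ≠ 0) : a = 1 := by revert h; revert a; decide

lemma sum_zmod2 (f : ZMod 2 → ℝ) : ∑ x, f x = f 0 + f 1 := by
  have : (univ : Finset (ZMod 2)) = {0, 1} := by decide
  rw [this, Finset.sum_insert (by decide), Finset.sum_singleton]

variable {n : ℕ}

/-- transvection-like involutive linear equivalence over `ZMod 2`. -/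
def tv (j : Fin n) (w : Fin n → ZMod 2) (hw : w j = 0) :
    (Fin n → ZMod 2) ≃ₗ[ZMod 2] (Fin n → ZMod 2) :=
  LinearEquiv.ofInvolutive
    { toFun := fun u => u + u j • w
      map_add' := by
        intro u v
        simp only [Pi.add_apply, add_smul]
        abel
      map_smul' := by
        intro c u
        simp only [Pi.smul_apply, smul_eq_mul, RingHom.id_apply, mul_smul, smul_add]
    }
    (by
      intro u
      simp only [LinearMap.coe_mk, AddHom.coe_mk]
      have h1 : (u + u j • w) j = u j := by
        simp [hw]
      rw [h1, add_assoc, ← add_smul, zmod2_add_self, zero_smul, add_zero])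

lemma tv_apply (j : Fin n) (w : Fin n → ZMod 2) (hw : w j = 0) (u : Fin n → ZMod 2) :
    tv j w hw u = u + u j • w := rfl


lemma zmod2_eq_zero {a : ZMod 2} (h : a ≠ 1) : a = 0 := by revert h; revert a; decide

lemma vec_add_self (x : Fin n → ZMod 2) : x + x = 0 := by
  funext i; exact zmod2_add_self (x i)

abbrev Vn (n : ℕ) := Fin n → ZMod 2

lemma tv_fix (j : Fin n) (w : Vn n) (hw : w j = 0) (u : Vn n) (hu : u j = 0) :
    tv j w hw u = u := by
  rw [tv_apply, hu, zero_smul, add_zero]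

lemma tv_send (j : Fin n) (x : Vn n) (hxj : x j = 1) :
    tv j (x + Pi.single j 1) (by simp [hxj, zmod2_add_self]) x = Pi.single j 1 := by
  rw [tv_apply, hxj, one_smul, ← add_assoc, vec_add_self, zero_add]

lemma exists_to_single (x : Vn n) (hx : x ≠ 0) (j : Fin n) :
    ∃ A : Vn n ≃ₗ[ZMod 2] Vn n, A x = Pi.single j 1 := by
  obtain ⟨j', hj'⟩ : ∃ j', x j' ≠ 0 := by
    by_contra h; push_neg at h; exact hx (funext h)
  have hj'1 : x j' = 1 := zmod2_eq_one hj'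
  by_cases hxj : x j = 1
  · exact ⟨_, tv_send j x hxj⟩
  · have hxj0 : x j = 0 := zmod2_eq_zero hxj
    have hjj : j' ≠ j := by intro h; rw [h, hxj0] at hj'1; exact zero_ne_one hj'1
    have hw : (Pi.single j 1 : Vn n) j' = 0 := Pi.single_eq_of_ne hjj 1
    set x1 : Vn n := x + Pi.single j 1 with hx1
    have hA1 : tv j' (Pi.single j 1) hw x = x1 := by
      rw [tv_apply, hj'1, one_smul]
    have hx1j : x1 j = 1 := by
      simp [hx1, hxj0]
    refine ⟨(tv j' (Pi.single j 1) hw).trans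
      (tv j (x1 + Pi.single j 1) (by simp [hx1j, zmod2_add_self])), ?_⟩
    rw [LinearEquiv.trans_apply, hA1, tv_send j x1 hx1j]

lemma pair_step (z : Vn n) (i0 i1 : Fin n) (hne : i0 ≠ i1) (hz0 : z ≠ 0)
    (hz : z ≠ Pi.single i0 1) :
    ∃ B : Vn n ≃ₗ[ZMod 2] Vn n, B z = Pi.single i1 1 ∧
      B (Pi.single i0 1) = Pi.single i0 1 := by
  obtain ⟨j, hji0, hzj⟩ : ∃ j, j ≠ i0 ∧ z j = 1 := by
    by_contra h; push_neg at h
    have hz' : ∀ j, j ≠ i0 → z j = 0 := fun j hj => zmod2_eq_zero (h j hj)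
    have : z = Pi.single i0 (z i0) := by
      funext j
      by_cases hj : j = i0
      · rw [hj, Pi.single_eq_same]
      · rw [hz' j hj, Pi.single_eq_of_ne hj]
    have hcase : ∀ a : ZMod 2, a = 0 ∨ a = 1 := by decide
    rcases hcase (z i0) with h0 | h1
    · rw [h0] at this; simp at this; exact hz0 this
    · rw [h1] at this; exact hz this
  have he0j : (Pi.single i0 1 : Vn n) j = 0 := Pi.single_eq_of_ne hji0 1
  by_cases hzi1 : z i1 = 1
  · refine ⟨_, tv_send i1 z hzi1, ?_⟩
    exact tv_fix _ _ _ _ (Pi.single_eq_of_ne (Ne.symm hne) 1)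
  · have hzi1' : z i1 = 0 := zmod2_eq_zero hzi1
    have hji1 : j ≠ i1 := by intro h; rw [h, hzi1'] at hzj; exact zero_ne_one hzj
    have hw : (Pi.single i1 1 : Vn n) j = 0 := Pi.single_eq_of_ne hji1 1
    set z2 : Vn n := z + Pi.single i1 1 with hz2
    have hB1z : tv j (Pi.single i1 1) hw z = z2 := by rw [tv_apply, hzj, one_smul]
    have hz2i1 : z2 i1 = 1 := by simp [hz2, hzi1']
    refine ⟨(tv j (Pi.single i1 1) hw).trans
      (tv i1 (z2 + Pi.single i1 1) (by simp [hz2i1, zmod2_add_self])), ?_, ?_⟩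
    · rw [LinearEquiv.trans_apply, hB1z, tv_send i1 z2 hz2i1]
    · rw [LinearEquiv.trans_apply, tv_fix _ _ _ _ he0j,
        tv_fix _ _ _ _ (Pi.single_eq_of_ne (Ne.symm hne) 1)]

lemma exists_pair (x z : Vn n) (hx : x ≠ 0) (hz0 : z ≠ 0) (hzx : z ≠ x)
    (i0 i1 : Fin n) (hne : i0 ≠ i1) :
    ∃ A : Vn n ≃ₗ[ZMod 2] Vn n, A x = Pi.single i0 1 ∧ A z = Pi.single i1 1 := by
  obtain ⟨A1, hA1⟩ := exists_to_single x hx i0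
  have hz1 : A1 z ≠ 0 := by
    rw [Ne, LinearEquiv.map_eq_zero_iff]; exact hz0
  have hz1' : A1 z ≠ Pi.single i0 1 := by
    rw [← hA1]; intro h; exact hzx (A1.injective h)
  obtain ⟨B, hB1, hB2⟩ := pair_step (A1 z) i0 i1 hne hz1 hz1'
  exact ⟨A1.trans B, by rw [LinearEquiv.trans_apply, hA1, hB2],
    by rw [LinearEquiv.trans_apply, hB1]⟩


section MtxAux

variable (n k : ℕ)

abbrev Mtx (n k : ℕ) := Matrix (Fin (n - k)) (Fin n) (ZMod 2)

/-- `∑_H [Hx=0 ∧ Hz=0] / |nullNZ H|`. -/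
def rsum (x z : Vn n) : ℝ :=
  ∑ H : Mtx n k, if H.mulVec x = 0 ∧ H.mulVec z = 0
    then 1 / ((nullNZ n k H).card : ℝ) else 0

variable {n k}

lemma mulVec_toMatrix (A : Vn n ≃ₗ[ZMod 2] Vn n) (H : Mtx n k) (v : Vn n) :
    (H * LinearMap.toMatrix' (A : Vn n →ₗ[ZMod 2] Vn n)).mulVec v = H.mulVec (A v) := by
  have h2 : (LinearMap.toMatrix' (A : Vn n →ₗ[ZMod 2] Vn n)).mulVec v = A v := by
    rw [← Matrix.toLin'_apply, Matrix.toLin'_toMatrix']; rfl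
  rw [← Matrix.mulVec_mulVec, h2]

lemma card_nullNZ_mul (A : Vn n ≃ₗ[ZMod 2] Vn n) (H : Mtx n k) :
    (nullNZ n k (H * LinearMap.toMatrix' (A : Vn n →ₗ[ZMod 2] Vn n))).card
      = (nullNZ n k H).card := by
  apply Finset.card_bij (fun v _ => A v)
  · intro v hv
    rw [nullNZ, Finset.mem_filter] at hv ⊢
    refine ⟨Finset.mem_univ _, ?_, ?_⟩
    · rw [← mulVec_toMatrix A H v]; exact hv.2.1
    · rw [Ne, LinearEquiv.map_eq_zero_iff]; exact hv.2.2
  · intro v₁ _ v₂ _ h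
    exact A.injective h
  · intro w hw
    rw [nullNZ, Finset.mem_filter] at hw
    refine ⟨A.symm w, ?_, A.apply_symm_apply w⟩
    rw [nullNZ, Finset.mem_filter]
    refine ⟨Finset.mem_univ _, ?_, ?_⟩
    · rw [mulVec_toMatrix A H, A.apply_symm_apply]; exact hw.2.1
    · rw [Ne, LinearEquiv.map_eq_zero_iff]
      intro h; exact hw.2.2 h

/-- The bijection `H ↦ H * M_A` on parity-check matrices. -/
def mulEquiv (A : Vn n ≃ₗ[ZMod 2] Vn n) : Mtx n k ≃ Mtx n k where
  toFun H := H * LinearMap.toMatrix' (A : Vn n →ₗ[ZMod 2] Vn n)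
  invFun H := H * LinearMap.toMatrix' (A.symm : Vn n →ₗ[ZMod 2] Vn n)
  left_inv H := by
    dsimp only
    rw [Matrix.mul_assoc, ← LinearMap.toMatrix'_comp]
    have : (A : Vn n →ₗ[ZMod 2] Vn n) ∘ₗ (A.symm : Vn n →ₗ[ZMod 2] Vn n)
        = LinearMap.id := by
      ext v; simp
    rw [this, LinearMap.toMatrix'_id, Matrix.mul_one]
  right_inv H := by
    dsimp only
    rw [Matrix.mul_assoc, ← LinearMap.toMatrix'_comp]
    have : (A.symm : Vn n →ₗ[ZMod 2] Vn n) ∘ₗ (A : Vn n →ₗ[ZMod 2] Vn n)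
        = LinearMap.id := by
      ext v; simp
    rw [this, LinearMap.toMatrix'_id, Matrix.mul_one]

lemma rsum_equiv (A : Vn n ≃ₗ[ZMod 2] Vn n) (x z : Vn n) :
    rsum n k (A x) (A z) = rsum n k x z := by
  unfold rsum
  have key : ∀ H : Mtx n k,
      (if H.mulVec (A x) = 0 ∧ H.mulVec (A z) = 0
        then 1 / ((nullNZ n k H).card : ℝ) else 0)
      = (fun H' : Mtx n k => if H'.mulVec x = 0 ∧ H'.mulVec z = 0
          then 1 / ((nullNZ n k H').card : ℝ) else 0) (mulEquiv A H) := by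
    intro H
    dsimp only [mulEquiv, Equiv.coe_fn_mk]
    rw [mulVec_toMatrix A H x, mulVec_toMatrix A H z, card_nullNZ_mul A H]
  rw [Finset.sum_congr rfl (fun H _ => key H)]
  exact Fintype.sum_equiv (mulEquiv A) _ _ (fun H => rfl)

end MtxAux

section CountAux

variable {n k : ℕ}

lemma card_row_zero (w : Vn n) (hw : w ≠ 0) :
    ∑ r : Vn n, (if r ⬝ᵥ w = 0 then (1 : ℝ) else 0) = ((2 : ℕ) ^ (n - 1) : ℝ) := by
  have hn : n ≠ 0 := by rintro rfl; exact hw (funext fun i => i.elim0)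
  obtain ⟨j0, hj0⟩ : ∃ j0, w j0 ≠ 0 := by
    by_contra h; push_neg at h; exact hw (funext h)
  have hj1 : w j0 = 1 := zmod2_eq_one hj0
  set t : Vn n := Pi.single j0 1 with ht
  have htw : t ⬝ᵥ w = 1 := by
    rw [ht, single_dotProduct, one_mul, hj1]
  set P : Vn n → Prop := fun r => r ⬝ᵥ w = 0 with hP
  have hcards : (univ.filter P).card = (univ.filter fun r => ¬ P r).card := by
    apply Finset.card_bij (fun r _ => r + t)
    · intro r hr
      rw [Finset.mem_filter] at hr ⊢
      refine ⟨Finset.mem_univ _, ?_⟩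
      rw [hP]
      simp only [add_dotProduct, htw]
      rw [hr.2]
      decide
    · intro r₁ _ r₂ _ h
      exact add_right_cancel h
    · intro s hs
      rw [Finset.mem_filter] at hs
      refine ⟨s + t, ?_, ?_⟩
      · rw [Finset.mem_filter]
        refine ⟨Finset.mem_univ _, ?_⟩
        have : s ⬝ᵥ w = 1 := zmod2_eq_one hs.2
        show (s + t) ⬝ᵥ w = 0
        rw [add_dotProduct, htw, this]
        decide
      · rw [add_assoc, vec_add_self, add_zero]
  have htotal : (univ.filter P).card + (univ.filter fun r => ¬ P r).card
      = 2 ^ n := by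
    rw [Finset.card_filter_add_card_filter_not, Finset.card_univ,
      Fintype.card_fun, ZMod.card, Fintype.card_fin]
  have hpow : 2 ^ n = 2 ^ (n - 1) * 2 := by
    rw [← pow_succ, Nat.sub_add_cancel (Nat.one_le_iff_ne_zero.mpr hn)]
  have hcard : (univ.filter P).card = 2 ^ (n - 1) := by omega
  rw [Finset.sum_boole, hcard]
  norm_cast

set_option maxHeartbeats 1000000 in
lemma sum_H_row (w : Vn n) (hw : w ≠ 0) :
    ∑ H : Mtx n k, (if H.mulVec w = 0 then (1 : ℝ) else 0)
      = ((2 : ℕ) ^ (n - 1) : ℝ) ^ (n - k) := by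
  have h1 : ∀ g : Fin (n - k) → Vn n,
      (∏ i, if g i ⬝ᵥ w = 0 then (1 : ℝ) else 0)
        = (if (Matrix.of g).mulVec w = 0 then (1 : ℝ) else 0) := by
    intro g
    by_cases h : (Matrix.of g).mulVec w = 0
    · have hall : ∀ i, g i ⬝ᵥ w = 0 := fun i => congrFun h i
      rw [if_pos h]
      rw [Finset.prod_congr rfl fun i _ => if_pos (hall i), Finset.prod_const_one]
    · rw [if_neg h]
      obtain ⟨i, hi⟩ : ∃ i, g i ⬝ᵥ w ≠ 0 := by
        by_contra hc; push_neg at hc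
        exact h (funext fun i => hc i)
      exact Finset.prod_eq_zero (Finset.mem_univ i) (if_neg hi)
  calc ∑ H : Mtx n k, (if H.mulVec w = 0 then (1 : ℝ) else 0)
      = ∑ g : Fin (n - k) → Vn n, ∏ i, (if g i ⬝ᵥ w = 0 then (1 : ℝ) else 0) := by
        exact (Fintype.sum_equiv
          (Matrix.of : (Fin (n - k) → Vn n) ≃ Mtx n k)
          (fun g => ∏ i, if g i ⬝ᵥ w = 0 then (1 : ℝ) else 0)
          (fun H => if H.mulVec w = 0 then (1 : ℝ) else 0)
          (fun g => h1 g)).symm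
    _ = ∏ _i : Fin (n - k), ∑ r : Vn n, (if r ⬝ᵥ w = 0 then (1 : ℝ) else 0) :=
        sum_fun_prod (fun (_ : Fin (n - k)) (r : Vn n) => if r ⬝ᵥ w = 0 then (1 : ℝ) else 0)
    _ = ((2 : ℕ) ^ (n - 1) : ℝ) ^ (n - k) := by
        rw [Finset.prod_congr rfl fun i _ => card_row_zero w hw, Finset.prod_const,
          Finset.card_univ, Fintype.card_fin]

lemma card_Mtx : Fintype.card (Mtx n k) = 2 ^ ((n - k) * n) := by
  rw [Fintype.card_congr (Matrix.of.symm :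
    Mtx n k ≃ (Fin (n - k) → Fin n → ZMod 2))]
  rw [Fintype.card_fun, Fintype.card_fun, ZMod.card, Fintype.card_fin,
    Fintype.card_fin, ← pow_mul, Nat.mul_comm]

lemma nullNZ_card_pos (hk : 1 ≤ k) (hkn : k < n) (H : Mtx n k) :
    0 < (nullNZ n k H).card := by
  rw [Finset.card_pos]
  by_contra hemp
  rw [Finset.not_nonempty_iff_eq_empty] at hemp
  have hinj : Function.Injective (Matrix.mulVecLin H) := by
    rw [← LinearMap.ker_eq_bot]
    rw [LinearMap.ker_eq_bot']
    intro m hm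
    by_contra hm0
    have : m ∈ nullNZ n k H := by
      rw [nullNZ, Finset.mem_filter]
      exact ⟨Finset.mem_univ _, hm, hm0⟩
    rw [hemp] at this
    exact absurd this (Finset.notMem_empty m)
  have hle := LinearMap.finrank_le_finrank_of_injective hinj
  rw [Module.finrank_fin_fun, Module.finrank_fin_fun] at hle
  omega

end CountAux

section RsumFacts

variable {n k : ℕ}

lemma exists_to (x x' : Vn n) (hx : x ≠ 0) (hx' : x' ≠ 0) :
    ∃ A : Vn n ≃ₗ[ZMod 2] Vn n, A x = x' := by
  have hn : n ≠ 0 := by rintro rfl; exact hx (funext fun i => i.elim0)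
  obtain ⟨A1, h1⟩ := exists_to_single x hx ⟨0, Nat.pos_of_ne_zero hn⟩
  obtain ⟨A2, h2⟩ := exists_to_single x' hx' ⟨0, Nat.pos_of_ne_zero hn⟩
  exact ⟨A1.trans A2.symm, by
    rw [LinearEquiv.trans_apply, h1, ← h2, LinearEquiv.symm_apply_apply]⟩

lemma rsum_nonneg (x z : Vn n) : 0 ≤ rsum n k x z := by
  apply Finset.sum_nonneg
  intro H _
  split_ifs with h
  · positivity
  · exact le_rfl

lemma rsum_le_rho (x z : Vn n) : rsum n k x z ≤ rsum n k x 0 := by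
  apply Finset.sum_le_sum
  intro H _
  by_cases hx : H.mulVec x = 0
  · by_cases hz : H.mulVec z = 0 <;>
      simp [hx, hz, Matrix.mulVec_zero] <;> positivity
  · simp [hx]

lemma rho_eq (x x' : Vn n) (hx : x ≠ 0) (hx' : x' ≠ 0) :
    rsum n k x 0 = rsum n k x' 0 := by
  obtain ⟨A, hA⟩ := exists_to x x' hx hx'
  have := rsum_equiv (k := k) A x 0
  rw [hA, map_zero] at this
  exact this.symm

lemma sig_eq (h2 : 2 ≤ n) (x z x' z' : Vn n) (hx : x ≠ 0) (hz : z ≠ 0)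
    (hzx : z ≠ x) (hx' : x' ≠ 0) (hz' : z' ≠ 0) (hz'x' : z' ≠ x') :
    rsum n k x z = rsum n k x' z' := by
  set i0 : Fin n := ⟨0, by omega⟩
  set i1 : Fin n := ⟨1, by omega⟩
  have hne : i0 ≠ i1 := Fin.ne_of_val_ne (by simp [i0, i1])
  obtain ⟨A, hA1, hA2⟩ := exists_pair x z hx hz hzx i0 i1 hne
  obtain ⟨B, hB1, hB2⟩ := exists_pair x' z' hx' hz' hz'x' i0 i1 hne
  have h1 := rsum_equiv (k := k) A x z
  have h2' := rsum_equiv (k := k) B x' z'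
  rw [hA1, hA2] at h1
  rw [hB1, hB2] at h2'
  rw [← h1, ← h2']

lemma sum_rho (hk : 1 ≤ k) (hkn : k < n) :
    ∑ x ∈ univ.erase (0 : Vn n), rsum n k x 0 = ((2 : ℕ) ^ ((n - k) * n) : ℝ) := by
  unfold rsum
  rw [Finset.sum_comm]
  have hH : ∀ H : Mtx n k,
      (∑ x ∈ univ.erase (0 : Vn n),
        if H.mulVec x = 0 ∧ H.mulVec 0 = 0 then 1 / ((nullNZ n k H).card : ℝ) else 0)
      = 1 := by
    intro H
    have hfil : (univ.erase (0 : Vn n)).filter (fun x => H.mulVec x = 0)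
        = nullNZ n k H := by
      ext z
      simp only [Finset.mem_filter, Finset.mem_erase, Finset.mem_univ, nullNZ,
        true_and, and_true]
      tauto
    calc (∑ x ∈ univ.erase (0 : Vn n),
          if H.mulVec x = 0 ∧ H.mulVec 0 = 0 then 1 / ((nullNZ n k H).card : ℝ) else 0)
        = ∑ x ∈ (univ.erase (0 : Vn n)).filter (fun x => H.mulVec x = 0),
            1 / ((nullNZ n k H).card : ℝ) := by
          rw [Finset.sum_filter]
          exact Finset.sum_congr rfl fun x _ => by
            simp [Matrix.mulVec_zero]
      _ = 1 := by
          rw [Finset.sum_const, hfil, nsmul_eq_mul, mul_one_div, div_self]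
          exact_mod_cast (nullNZ_card_pos hk hkn H).ne'
  rw [Finset.sum_congr rfl fun H _ => hH H, Finset.sum_const, Finset.card_univ,
    card_Mtx, nsmul_eq_mul, mul_one]
  norm_cast

lemma sig_row (hk : 1 ≤ k) (hkn : k < n) (x : Vn n) (hx : x ≠ 0) :
    ∑ z ∈ (univ.erase x).erase (0 : Vn n), rsum n k x z
      = ((2 : ℕ) ^ (n - 1) : ℝ) ^ (n - k) - rsum n k x 0 := by
  unfold rsum
  rw [Finset.sum_comm]
  have hH : ∀ H : Mtx n k,
      (∑ z ∈ (univ.erase x).erase (0 : Vn n),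
        if H.mulVec x = 0 ∧ H.mulVec z = 0 then 1 / ((nullNZ n k H).card : ℝ) else 0)
      = (if H.mulVec x = 0 then (1:ℝ) else 0)
        - (if H.mulVec x = 0 ∧ H.mulVec 0 = 0 then 1 / ((nullNZ n k H).card : ℝ) else 0) := by
    intro H
    by_cases hx0 : H.mulVec x = 0
    · have hxmem : x ∈ nullNZ n k H := by
        rw [nullNZ, Finset.mem_filter]; exact ⟨Finset.mem_univ _, hx0, hx⟩
      have hfil : ((univ.erase x).erase (0 : Vn n)).filter (fun z => H.mulVec z = 0)
          = (nullNZ n k H).erase x := by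
        ext z
        simp only [Finset.mem_filter, Finset.mem_erase, Finset.mem_univ, nullNZ,
          true_and, and_true]
        tauto
      have hm1 : 1 ≤ (nullNZ n k H).card := Finset.card_pos.mpr ⟨x, hxmem⟩
      calc (∑ z ∈ (univ.erase x).erase (0 : Vn n),
            if H.mulVec x = 0 ∧ H.mulVec z = 0 then 1 / ((nullNZ n k H).card : ℝ) else 0)
          = ∑ z ∈ ((univ.erase x).erase (0 : Vn n)).filter (fun z => H.mulVec z = 0),
              1 / ((nullNZ n k H).card : ℝ) := by
            rw [Finset.sum_filter]
            exact Finset.sum_congr rfl fun z _ => by simp [hx0]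
        _ = (((nullNZ n k H).card - 1 : ℕ) : ℝ) * (1 / ((nullNZ n k H).card : ℝ)) := by
            rw [Finset.sum_const, hfil, Finset.card_erase_of_mem hxmem, nsmul_eq_mul]
        _ = 1 - 1 / ((nullNZ n k H).card : ℝ) := by
            rw [Nat.cast_sub hm1, Nat.cast_one]
            have hc : ((nullNZ n k H).card : ℝ) ≠ 0 := by
              have : (nullNZ n k H).card ≠ 0 := by omega
              exact_mod_cast this
            field_simp
        _ = (if H.mulVec x = 0 then (1:ℝ) else 0)
            - (if H.mulVec x = 0 ∧ H.mulVec 0 = 0 then 1 / ((nullNZ n k H).card : ℝ) else 0) := by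
            simp [hx0, Matrix.mulVec_zero]
    · simp [hx0]
  rw [Finset.sum_congr rfl fun H _ => hH H, Finset.sum_sub_distrib,
    sum_H_row x hx]

end RsumFacts

section ChannelAux

variable {Y : Type} [Fintype Y] (W : BIMC Y) {n : ℕ} (δ : ℝ)

lemma pXY_pos (x : ZMod 2) (y : Y) : 0 < W.pXY x y :=
  div_pos (W.p_pos x y) (add_pos (W.p_pos 0 y) (W.p_pos 1 y))

lemma pXY_sum (y : Y) : ∑ a : ZMod 2, W.pXY a y = 1 := by
  rw [sum_zmod2]
  rw [BIMC.pXY, BIMC.pXY, ← add_div, div_self]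
  exact (add_pos (W.p_pos 0 y) (W.p_pos 1 y)).ne'

lemma prod_p_nonneg (x : Vn n) (y : Fin n → Y) : 0 ≤ ∏ i, W.p (x i) (y i) :=
  Finset.prod_nonneg fun i _ => (W.p_pos _ _).le

lemma prod_pXY_nonneg (z : Vn n) (y : Fin n → Y) : 0 ≤ ∏ i, W.pXY (z i) (y i) :=
  Finset.prod_nonneg fun i _ => (pXY_pos W _ _).le

lemma sum_y_prod_p (x : Vn n) : ∑ y : Fin n → Y, ∏ i, W.p (x i) (y i) = 1 := by
  rw [sum_fun_prod (fun i a => W.p (x i) a)]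
  rw [Finset.prod_congr rfl fun i _ => W.p_sum (x i), Finset.prod_const_one]

lemma sum_z_prod_pXY (y : Fin n → Y) : ∑ z : Vn n, ∏ i, W.pXY (z i) (y i) = 1 := by
  rw [sum_fun_prod (fun i a => W.pXY a (y i))]
  rw [Finset.prod_congr rfl fun i _ => pXY_sum W (y i), Finset.prod_const_one]

/-- `f(x) = Pr{x ∉ jar(Y^n)} ` -/
def fX (W : BIMC Y) (n : ℕ) (δ : ℝ) (x : Vn n) : ℝ :=
  ∑ y : Fin n → Y, (∏ i, W.p (x i) (y i)) * (if x ∉ W.jar n δ y then 1 else 0)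

def gXZ (W : BIMC Y) (n : ℕ) (δ : ℝ) (x z : Vn n) : ℝ :=
  ∑ y : Fin n → Y, (∏ i, W.p (x i) (y i)) * (if z ∈ W.jar n δ y then 1 else 0)

def GXZ (W : BIMC Y) (n : ℕ) (x z : Vn n) : ℝ :=
  ∑ y : Fin n → Y, (∏ i, W.p (x i) (y i)) * (∏ i, W.pXY (z i) (y i))

lemma fX_nonneg (x : Vn n) : 0 ≤ fX W n δ x :=
  Finset.sum_nonneg fun y _ => mul_nonneg (prod_p_nonneg W x y) (by positivity)

lemma gXZ_nonneg (x z : Vn n) : 0 ≤ gXZ W n δ x z :=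
  Finset.sum_nonneg fun y _ => mul_nonneg (prod_p_nonneg W x y) (by positivity)

lemma GXZ_nonneg (x z : Vn n) : 0 ≤ GXZ W n x z :=
  Finset.sum_nonneg fun y _ => mul_nonneg (prod_p_nonneg W x y) (prod_pXY_nonneg W z y)

lemma sum_fX : ∑ x : Vn n, fX W n δ x = 2 ^ n * W.Pdelta n δ := by
  unfold fX BIMC.Pdelta
  rw [Finset.mul_sum]
  refine Finset.sum_congr rfl fun x _ => ?_
  rw [Finset.mul_sum]
  refine Finset.sum_congr rfl fun y _ => ?_
  have hprod : (2:ℝ) ^ n * (∏ i, (1 / 2 : ℝ) * W.p (x i) (y i))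
      = ∏ i, W.p (x i) (y i) := by
    rw [Finset.prod_mul_distrib, Finset.prod_const, Finset.card_univ,
      Fintype.card_fin, ← mul_assoc, ← mul_pow]
    norm_num
  have hite : (if x ∉ W.jar n δ y then (1:ℝ) else 0)
      = (if W.condEnt + δ < -(1 / (n : ℝ)) * ∑ i, Real.log (W.pXY (x i) (y i))
          then (1:ℝ) else 0) := by
    refine if_congr ?_ rfl rfl
    rw [BIMC.jar, Finset.mem_filter]
    simp only [Finset.mem_univ, true_and, not_le]
  rw [hite, ← hprod]
  ring

lemma jar_markov (hn : 0 < n) {z : Vn n} {y : Fin n → Y} (hz : z ∈ W.jar n δ y) :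
    (1 : ℝ) ≤ Real.exp ((n : ℝ) * (W.condEnt + δ)) * ∏ i, W.pXY (z i) (y i) := by
  have hmem : -(1 / (n : ℝ)) * ∑ i, Real.log (W.pXY (z i) (y i)) ≤ W.condEnt + δ := by
    rw [BIMC.jar, Finset.mem_filter] at hz
    exact hz.2
  have hprod : ∏ i, W.pXY (z i) (y i)
      = Real.exp (∑ i, Real.log (W.pXY (z i) (y i))) := by
    rw [Real.exp_sum]
    exact Finset.prod_congr rfl fun i _ => (Real.exp_log (pXY_pos W _ _)).symm
  rw [hprod, ← Real.exp_add, show (1:ℝ) = Real.exp 0 from Real.exp_zero.symm]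
  apply Real.exp_le_exp.mpr
  have hn' : (0 : ℝ) < n := by exact_mod_cast hn
  have h2 := mul_le_mul_of_nonneg_left hmem hn'.le
  have h3 : (n : ℝ) * (-(1 / (n : ℝ)) * ∑ i, Real.log (W.pXY (z i) (y i)))
      = -(∑ i, Real.log (W.pXY (z i) (y i))) := by
    field_simp
  rw [h3] at h2
  linarith

lemma gXZ_le (hn : 0 < n) (x z : Vn n) :
    gXZ W n δ x z ≤ Real.exp ((n : ℝ) * (W.condEnt + δ)) * GXZ W n x z := by
  rw [GXZ, Finset.mul_sum]
  apply Finset.sum_le_sum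
  intro y _
  by_cases hz : z ∈ W.jar n δ y
  · rw [if_pos hz, mul_one]
    calc (∏ i, W.p (x i) (y i))
        = (∏ i, W.p (x i) (y i)) * 1 := (mul_one _).symm
      _ ≤ (∏ i, W.p (x i) (y i)) *
            (Real.exp ((n : ℝ) * (W.condEnt + δ)) * ∏ i, W.pXY (z i) (y i)) :=
          mul_le_mul_of_nonneg_left (jar_markov W δ hn hz) (prod_p_nonneg W x y)
      _ = Real.exp ((n : ℝ) * (W.condEnt + δ)) *
            ((∏ i, W.p (x i) (y i)) * ∏ i, W.pXY (z i) (y i)) := by ring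
  · rw [if_neg hz, mul_zero]
    have := prod_pXY_nonneg W z y
    have := prod_p_nonneg W x y
    positivity

lemma sum_z_GXZ (x : Vn n) : ∑ z : Vn n, GXZ W n x z = 1 := by
  unfold GXZ
  rw [Finset.sum_comm]
  calc ∑ y : Fin n → Y, ∑ z : Vn n, (∏ i, W.p (x i) (y i)) * ∏ i, W.pXY (z i) (y i)
      = ∑ y : Fin n → Y, (∏ i, W.p (x i) (y i)) * ∑ z : Vn n, ∏ i, W.pXY (z i) (y i) := by
        exact Finset.sum_congr rfl fun y _ => (Finset.mul_sum _ _ _).symm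
    _ = ∑ y : Fin n → Y, ∏ i, W.p (x i) (y i) := by
        refine Finset.sum_congr rfl fun y _ => ?_
        rw [sum_z_prod_pXY W y, mul_one]
    _ = 1 := sum_y_prod_p W x

lemma sum_x_GXZ0 : ∑ x : Vn n, GXZ W n x 0 = 1 := by
  unfold GXZ
  rw [Finset.sum_comm]
  calc ∑ y : Fin n → Y, ∑ x : Vn n, (∏ i, W.p (x i) (y i)) * ∏ i, W.pXY ((0 : Vn n) i) (y i)
      = ∑ y : Fin n → Y, ∏ i, W.p 0 (y i) := by
        refine Finset.sum_congr rfl fun y _ => ?_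
        rw [← Finset.sum_mul, sum_fun_prod (fun i a => W.p a (y i))]
        rw [← Finset.prod_mul_distrib]
        refine Finset.prod_congr rfl fun i _ => ?_
        rw [Pi.zero_apply, sum_zmod2 (fun a => W.p a (y i)), BIMC.pXY]
        rw [mul_div_cancel₀]
        exact (add_pos (W.p_pos 0 (y i)) (W.p_pos 1 (y i))).ne'
    _ = 1 := sum_y_prod_p W 0

lemma Pdelta_nonneg : 0 ≤ W.Pdelta n δ := by
  unfold BIMC.Pdelta
  refine Finset.sum_nonneg fun x _ => Finset.sum_nonneg fun z _ => mul_nonneg ?_ (by positivity)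
  exact Finset.prod_nonneg fun i _ => by have := (W.p_pos (x i) (z i)).le; positivity

end ChannelAux

section Decomp

variable {Y : Type} [Fintype Y] (W : BIMC Y) {n k : ℕ} (δ : ℝ)

lemma ind_le (H : Mtx n k) (x : Vn n) (y : Fin n → Y) :
    (if x ∉ W.jar n δ y ∨ ∃ z, z ≠ x ∧ Matrix.mulVec H z = 0 ∧ z ∈ W.jar n δ y
      then (1:ℝ) else 0)
      ≤ (if x ∉ W.jar n δ y then (1:ℝ) else 0)
        + ∑ z ∈ univ.erase x, (if Matrix.mulVec H z = 0 then (1:ℝ) else 0)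
            * (if z ∈ W.jar n δ y then (1:ℝ) else 0) := by
  have hsum : (0:ℝ) ≤ ∑ z ∈ univ.erase x,
      (if Matrix.mulVec H z = 0 then (1:ℝ) else 0)
        * (if z ∈ W.jar n δ y then (1:ℝ) else 0) :=
    Finset.sum_nonneg fun z _ => by positivity
  by_cases h1 : x ∉ W.jar n δ y
  · rw [if_pos (Or.inl h1), if_pos h1]
    linarith
  · rw [if_neg h1]
    by_cases h2 : ∃ z, z ≠ x ∧ Matrix.mulVec H z = 0 ∧ z ∈ W.jar n δ y
    · rw [if_pos (Or.inr h2)]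
      obtain ⟨z, hzx, hz0, hzj⟩ := h2
      have hmem : z ∈ univ.erase x := Finset.mem_erase.mpr ⟨hzx, Finset.mem_univ z⟩
      have hle := Finset.single_le_sum
        (f := fun z' => (if Matrix.mulVec H z' = 0 then (1:ℝ) else 0)
          * (if z' ∈ W.jar n δ y then (1:ℝ) else 0))
        (fun z' _ => by positivity) hmem
      rw [if_pos hz0, if_pos hzj, one_mul] at hle
      linarith
    · rw [if_neg (not_or.mpr ⟨h1, h2⟩)]
      linarith

lemma inner_eq (H : Mtx n k) (x : Vn n) :
    (∑ y : Fin n → Y, (∏ i, W.p (x i) (y i)) *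
      ((if x ∉ W.jar n δ y then (1:ℝ) else 0)
        + ∑ z ∈ univ.erase x, (if Matrix.mulVec H z = 0 then (1:ℝ) else 0)
            * (if z ∈ W.jar n δ y then (1:ℝ) else 0)))
    = fX W n δ x + ∑ z ∈ univ.erase x,
        (if Matrix.mulVec H z = 0 then (1:ℝ) else 0) * gXZ W n δ x z := by
  have hy : ∀ y : Fin n → Y, (∏ i, W.p (x i) (y i)) *
      ((if x ∉ W.jar n δ y then (1:ℝ) else 0)
        + ∑ z ∈ univ.erase x, (if Matrix.mulVec H z = 0 then (1:ℝ) else 0)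
            * (if z ∈ W.jar n δ y then (1:ℝ) else 0))
      = (∏ i, W.p (x i) (y i)) * (if x ∉ W.jar n δ y then (1:ℝ) else 0)
        + ∑ z ∈ univ.erase x, (if Matrix.mulVec H z = 0 then (1:ℝ) else 0)
            * ((∏ i, W.p (x i) (y i)) * (if z ∈ W.jar n δ y then (1:ℝ) else 0)) := by
    intro y
    rw [mul_add, Finset.mul_sum]
    congr 1
    exact Finset.sum_congr rfl fun z _ => by ring
  rw [Finset.sum_congr rfl fun y _ => hy y, Finset.sum_add_distrib]
  congr 1
  rw [Finset.sum_comm]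
  refine Finset.sum_congr rfl fun z _ => ?_
  rw [gXZ, Finset.mul_sum]

lemma perr_decomp :
    W.Perr n k δ ≤ (1 / (2:ℝ)^((n-k)*n)) *
      ((∑ x ∈ univ.erase (0 : Vn n), rsum n k x 0 * fX W n δ x)
        + ∑ x ∈ univ.erase (0 : Vn n), ∑ z ∈ univ.erase x,
            rsum n k x z * gXZ W n δ x z) := by
  classical
  have hC : (0:ℝ) ≤ 1 / (2:ℝ)^((n-k)*n) := by positivity
  have step1 : W.Perr n k δ ≤ ∑ H : Mtx n k, ∑ x : Vn n,
      (1 / (2:ℝ)^((n-k)*n)) *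
        ((if x ∈ nullNZ n k H then 1 / ((nullNZ n k H).card : ℝ) else 0) *
          (fX W n δ x + ∑ z ∈ univ.erase x,
            (if Matrix.mulVec H z = 0 then (1:ℝ) else 0) * gXZ W n δ x z)) := by
    unfold BIMC.Perr
    refine Finset.sum_le_sum fun H _ => Finset.sum_le_sum fun x _ => ?_
    rw [← inner_eq W δ H x, Finset.mul_sum, Finset.mul_sum]
    refine Finset.sum_le_sum fun y _ => ?_
    refine mul_le_mul_of_nonneg_left ?_ hC
    refine mul_le_mul_of_nonneg_left ?_ (by positivity)
    refine mul_le_mul_of_nonneg_left (ind_le W δ H x y) (prod_p_nonneg W x y)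
  refine le_trans step1 (le_of_eq ?_)
  rw [Finset.sum_comm]
  have hx_eq : ∀ x : Vn n,
      (∑ H : Mtx n k, (1 / (2:ℝ)^((n-k)*n)) *
        ((if x ∈ nullNZ n k H then 1 / ((nullNZ n k H).card : ℝ) else 0) *
          (fX W n δ x + ∑ z ∈ univ.erase x,
            (if Matrix.mulVec H z = 0 then (1:ℝ) else 0) * gXZ W n δ x z)))
      = (1 / (2:ℝ)^((n-k)*n)) *
          ((∑ H : Mtx n k,
              (if x ∈ nullNZ n k H then 1 / ((nullNZ n k H).card : ℝ) else 0)) * fX W n δ x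
            + ∑ z ∈ univ.erase x,
                (∑ H : Mtx n k,
                  (if x ∈ nullNZ n k H then 1 / ((nullNZ n k H).card : ℝ) else 0)
                    * (if Matrix.mulVec H z = 0 then (1:ℝ) else 0)) * gXZ W n δ x z) := by
    intro x
    rw [← Finset.mul_sum]
    congr 1
    have hH : ∀ H : Mtx n k,
        ((if x ∈ nullNZ n k H then 1 / ((nullNZ n k H).card : ℝ) else 0) *
          (fX W n δ x + ∑ z ∈ univ.erase x,
            (if Matrix.mulVec H z = 0 then (1:ℝ) else 0) * gXZ W n δ x z))
        = (if x ∈ nullNZ n k H then 1 / ((nullNZ n k H).card : ℝ) else 0) * fX W n δ x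
          + ∑ z ∈ univ.erase x,
              ((if x ∈ nullNZ n k H then 1 / ((nullNZ n k H).card : ℝ) else 0)
                * (if Matrix.mulVec H z = 0 then (1:ℝ) else 0)) * gXZ W n δ x z := by
      intro H
      rw [mul_add, Finset.mul_sum]
      congr 1
      exact Finset.sum_congr rfl fun z _ => by ring
    rw [Finset.sum_congr rfl fun H _ => hH H, Finset.sum_add_distrib, ← Finset.sum_mul]
    congr 1
    rw [Finset.sum_comm]
    exact Finset.sum_congr rfl fun z _ => (Finset.sum_mul _ _ _).symm
  rw [Finset.sum_congr rfl fun x _ => hx_eq x, ← Finset.mul_sum]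
  congr 1
  have hA : ∀ x : Vn n, x ≠ 0 →
      (∑ H : Mtx n k, (if x ∈ nullNZ n k H then 1 / ((nullNZ n k H).card : ℝ) else 0))
        = rsum n k x 0 := by
    intro x hx
    refine Finset.sum_congr rfl fun H _ => ?_
    simp [nullNZ, Finset.mem_filter, hx, Matrix.mulVec_zero]
  have hB : ∀ x z : Vn n, x ≠ 0 →
      (∑ H : Mtx n k, (if x ∈ nullNZ n k H then 1 / ((nullNZ n k H).card : ℝ) else 0)
          * (if Matrix.mulVec H z = 0 then (1:ℝ) else 0))
        = rsum n k x z := by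
    intro x z hx
    refine Finset.sum_congr rfl fun H _ => ?_
    by_cases h1 : Matrix.mulVec H x = 0 <;> by_cases h2 : Matrix.mulVec H z = 0 <;>
      simp [nullNZ, Finset.mem_filter, hx, h1, h2]
  have h0nz : ∀ H : Mtx n k, (0 : Vn n) ∉ nullNZ n k H := by
    intro H
    simp [nullNZ]
  rw [← Finset.add_sum_erase _ _ (Finset.mem_univ (0 : Vn n))]
  have hzero : (∑ H : Mtx n k,
        (if (0:Vn n) ∈ nullNZ n k H then 1 / ((nullNZ n k H).card : ℝ) else 0)) * fX W n δ 0
      + ∑ z ∈ univ.erase (0:Vn n),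
          (∑ H : Mtx n k,
            (if (0:Vn n) ∈ nullNZ n k H then 1 / ((nullNZ n k H).card : ℝ) else 0)
              * (if Matrix.mulVec H z = 0 then (1:ℝ) else 0)) * gXZ W n δ 0 z = 0 := by
    rw [Finset.sum_congr rfl fun H _ => if_neg (h0nz H), Finset.sum_const, smul_zero,
      zero_mul, zero_add]
    refine Finset.sum_eq_zero fun z _ => ?_
    rw [Finset.sum_congr rfl fun H (_ : H ∈ univ) => by rw [if_neg (h0nz H), zero_mul],
      Finset.sum_const, smul_zero, zero_mul]
  rw [hzero, zero_add]
  rw [Finset.sum_congr rfl fun x hx => ?_, Finset.sum_add_distrib]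
  have hx0 : x ≠ 0 := (Finset.mem_erase.mp hx).1
  rw [hA x hx0, Finset.sum_congr rfl fun z _ => by rw [hB x z hx0]]

end Decomp

end JarAux

/-- Theorem 1: for every block length `n`, every `k` with `1 ≤ k < n`
and every `δ > 0`,
`P_err(n,k,δ) ≤ (1/(1-2^{-n})) P_δ + e^{-n (C_L - δ - R)}` where `R = (k/n) ln 2`. -/
theorem gallager_error_bound {Y : Type} [Fintype Y] (W : BIMC Y)
    (n k : ℕ) (hk : 1 ≤ k) (hkn : k < n) (δ : ℝ) (hδ : 0 < δ) :
    W.Perr n k δ ≤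
      (1 / (1 - (2 : ℝ) ^ (-(n : ℝ)))) * W.Pdelta n δ +
        Real.exp (-(n : ℝ) * (W.CL - δ - (k : ℝ) / n * Real.log 2)) := by
  classical
  have hn : 0 < n := by omega
  have h2n : 2 ≤ n := by omega
  set i0 : Fin n := ⟨0, by omega⟩ with hi0
  set i1 : Fin n := ⟨1, by omega⟩ with hi1
  have hne : i0 ≠ i1 := Fin.ne_of_val_ne (by simp [hi0, hi1])
  set x₀ : Vn n := Pi.single i0 1 with hx₀def
  set z₀ : Vn n := Pi.single i1 1 with hz₀def
  have hone : (1 : ZMod 2) ≠ 0 := by decide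
  have hx₀ : x₀ ≠ 0 := by
    intro h
    have := congrFun h i0
    rw [hx₀def] at this
    rw [Pi.single_eq_same] at this
    exact hone this
  have hz₀ : z₀ ≠ 0 := by
    intro h
    have := congrFun h i1
    rw [hz₀def] at this
    rw [Pi.single_eq_same] at this
    exact hone this
  have hzx : z₀ ≠ x₀ := by
    intro h
    have := congrFun h i1
    rw [hz₀def, hx₀def] at this
    rw [Pi.single_eq_same, Pi.single_eq_of_ne (Ne.symm hne)] at this
    exact hone this
  set ρ := rsum n k x₀ 0 with hρdef
  set σ := rsum n k x₀ z₀ with hσdef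
  have Frho : ∀ x : Vn n, x ≠ 0 → rsum n k x 0 = ρ := fun x hx => rho_eq x x₀ hx hx₀
  have Fsig : ∀ x z : Vn n, x ≠ 0 → z ≠ 0 → z ≠ x → rsum n k x z = σ :=
    fun x z h1 h2 h3 => sig_eq h2n x z x₀ z₀ h1 h2 h3 hx₀ hz₀ hzx
  have hρ0 : 0 ≤ ρ := rsum_nonneg x₀ 0
  have hσ0 : 0 ≤ σ := rsum_nonneg x₀ z₀
  have hσρ : σ ≤ ρ := rsum_le_rho x₀ z₀
  have hcardV : Fintype.card (Vn n) = 2 ^ n := by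
    rw [Fintype.card_fun, ZMod.card, Fintype.card_fin]
  have hcard_er0 : (univ.erase (0 : Vn n)).card = 2 ^ n - 1 := by
    rw [Finset.card_erase_of_mem (Finset.mem_univ _), Finset.card_univ, hcardV]
  have h2n2 : 2 ≤ 2 ^ n := by
    calc 2 = 2 ^ 1 := (pow_one 2).symm
    _ ≤ 2 ^ n := Nat.pow_le_pow_right (by norm_num) (by omega)
  have FrhoTot : ((2 ^ n - 1 : ℕ) : ℝ) * ρ = ((2 : ℕ) ^ ((n - k) * n) : ℝ) := by
    have h := sum_rho (n := n) (k := k) hk hkn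
    rw [Finset.sum_congr rfl (fun x hx => Frho x (Finset.mem_erase.mp hx).1)] at h
    rw [Finset.sum_const, hcard_er0, nsmul_eq_mul] at h
    exact_mod_cast h
  have h0memx : (0 : Vn n) ∈ univ.erase x₀ :=
    Finset.mem_erase.mpr ⟨Ne.symm hx₀, Finset.mem_univ _⟩
  have hcard_er2 : ((univ.erase x₀).erase (0 : Vn n)).card = 2 ^ n - 2 := by
    rw [Finset.card_erase_of_mem h0memx,
      Finset.card_erase_of_mem (Finset.mem_univ _), Finset.card_univ, hcardV]
    omega
  have FsigTot : ((2 ^ n - 2 : ℕ) : ℝ) * σ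
      = ((2 : ℕ) ^ (n - 1) : ℝ) ^ (n - k) - ρ := by
    have h := sig_row hk hkn x₀ hx₀
    have hcg : ∀ z ∈ (univ.erase x₀).erase (0 : Vn n), rsum n k x₀ z = σ := by
      intro z hz
      obtain ⟨hz0, hzmem⟩ := Finset.mem_erase.mp hz
      obtain ⟨hzx₀, _⟩ := Finset.mem_erase.mp hzmem
      exact Fsig x₀ z hx₀ hz0 hzx₀
    rw [Finset.sum_congr rfl hcg, Finset.sum_const, hcard_er2, nsmul_eq_mul,
      Frho x₀ hx₀] at h
    exact h
  -- SA bound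
  have hPd : 0 ≤ W.Pdelta n δ := Pdelta_nonneg W δ
  have hSA : (∑ x ∈ univ.erase (0 : Vn n), rsum n k x 0 * fX W n δ x)
      ≤ ρ * ((2:ℝ) ^ n * W.Pdelta n δ) := by
    calc (∑ x ∈ univ.erase (0 : Vn n), rsum n k x 0 * fX W n δ x)
        = ∑ x ∈ univ.erase (0 : Vn n), ρ * fX W n δ x :=
          Finset.sum_congr rfl fun x hx => by
            rw [Frho x (Finset.mem_erase.mp hx).1]
      _ ≤ ∑ x : Vn n, ρ * fX W n δ x :=
          Finset.sum_le_sum_of_subset_of_nonneg (Finset.subset_univ _)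
            (fun x _ _ => mul_nonneg hρ0 (fX_nonneg W δ x))
      _ = ρ * ∑ x : Vn n, fX W n δ x := (Finset.mul_sum _ _ _).symm
      _ = ρ * ((2:ℝ) ^ n * W.Pdelta n δ) := by rw [sum_fX W δ]
  -- SB bound
  set E := Real.exp ((n : ℝ) * (W.condEnt + δ)) with hEdef
  have hE0 : (0:ℝ) ≤ E := (Real.exp_pos _).le
  have hxbound : ∀ x : Vn n, x ≠ 0 →
      (∑ z ∈ univ.erase x, rsum n k x z * gXZ W n δ x z)
        ≤ E * (σ + (ρ - σ) * GXZ W n x 0) := by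
    intro x hx
    have h0mem : (0 : Vn n) ∈ univ.erase x :=
      Finset.mem_erase.mpr ⟨Ne.symm hx, Finset.mem_univ _⟩
    rw [← Finset.add_sum_erase _ _ h0mem]
    have hterm1 : rsum n k x 0 * gXZ W n δ x 0 ≤ ρ * (E * GXZ W n x 0) := by
      rw [Frho x hx]
      exact mul_le_mul_of_nonneg_left (gXZ_le W δ hn x 0) hρ0
    have hGsub : (∑ z ∈ (univ.erase x).erase (0 : Vn n), GXZ W n x z)
        ≤ 1 - GXZ W n x 0 := by
      have hsub : ((univ.erase x).erase (0 : Vn n)) ⊆ univ.erase (0 : Vn n) :=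
        Finset.erase_subset_erase 0 (Finset.erase_subset x univ)
      calc (∑ z ∈ (univ.erase x).erase (0 : Vn n), GXZ W n x z)
          ≤ ∑ z ∈ univ.erase (0 : Vn n), GXZ W n x z :=
            Finset.sum_le_sum_of_subset_of_nonneg hsub
              (fun z _ _ => GXZ_nonneg W x z)
        _ = (∑ z : Vn n, GXZ W n x z) - GXZ W n x 0 :=
            Finset.sum_erase_eq_sub (Finset.mem_univ _)
        _ = 1 - GXZ W n x 0 := by rw [sum_z_GXZ W x]
    have hterm2 : (∑ z ∈ (univ.erase x).erase (0 : Vn n),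
        rsum n k x z * gXZ W n δ x z) ≤ σ * (E * (1 - GXZ W n x 0)) := by
      have hcg : ∀ z ∈ (univ.erase x).erase (0 : Vn n),
          rsum n k x z * gXZ W n δ x z = σ * gXZ W n δ x z := by
        intro z hz
        obtain ⟨hz0, hzmem⟩ := Finset.mem_erase.mp hz
        obtain ⟨hzx', _⟩ := Finset.mem_erase.mp hzmem
        rw [Fsig x z hx hz0 hzx']
      rw [Finset.sum_congr rfl hcg, ← Finset.mul_sum]
      refine mul_le_mul_of_nonneg_left ?_ hσ0
      calc (∑ z ∈ (univ.erase x).erase (0 : Vn n), gXZ W n δ x z)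
          ≤ ∑ z ∈ (univ.erase x).erase (0 : Vn n), E * GXZ W n x z :=
            Finset.sum_le_sum fun z _ => gXZ_le W δ hn x z
        _ = E * ∑ z ∈ (univ.erase x).erase (0 : Vn n), GXZ W n x z := by
            rw [Finset.mul_sum]
        _ ≤ E * (1 - GXZ W n x 0) := mul_le_mul_of_nonneg_left hGsub hE0
    calc rsum n k x 0 * gXZ W n δ x 0 + (∑ z ∈ (univ.erase x).erase (0 : Vn n),
          rsum n k x z * gXZ W n δ x z)
        ≤ ρ * (E * GXZ W n x 0) + σ * (E * (1 - GXZ W n x 0)) :=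
          add_le_add hterm1 hterm2
      _ = E * (σ + (ρ - σ) * GXZ W n x 0) := by ring
  have hS1 : (∑ x ∈ univ.erase (0 : Vn n), GXZ W n x 0) ≤ 1 := by
    rw [← sum_x_GXZ0 W (n := n)]
    exact Finset.sum_le_sum_of_subset_of_nonneg (Finset.subset_univ _)
      (fun x _ _ => GXZ_nonneg W x 0)
  have hSB : (∑ x ∈ univ.erase (0 : Vn n), ∑ z ∈ univ.erase x,
        rsum n k x z * gXZ W n δ x z)
      ≤ E * ((2 : ℕ) ^ (n - 1) : ℝ) ^ (n - k) := by
    calc (∑ x ∈ univ.erase (0 : Vn n), ∑ z ∈ univ.erase x,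
          rsum n k x z * gXZ W n δ x z)
        ≤ ∑ x ∈ univ.erase (0 : Vn n), E * (σ + (ρ - σ) * GXZ W n x 0) :=
          Finset.sum_le_sum fun x hx => hxbound x (Finset.mem_erase.mp hx).1
      _ = ((2 ^ n - 1 : ℕ) : ℝ) * (E * σ)
            + E * (ρ - σ) * ∑ x ∈ univ.erase (0 : Vn n), GXZ W n x 0 := by
          rw [Finset.sum_congr rfl (fun x _ => by ring :
            ∀ x ∈ univ.erase (0 : Vn n), E * (σ + (ρ - σ) * GXZ W n x 0)
              = E * σ + E * (ρ - σ) * GXZ W n x 0),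
            Finset.sum_add_distrib, Finset.sum_const, hcard_er0, nsmul_eq_mul,
            ← Finset.mul_sum]
      _ ≤ ((2 ^ n - 1 : ℕ) : ℝ) * (E * σ) + E * (ρ - σ) * 1 := by
          have : (0:ℝ) ≤ E * (ρ - σ) := mul_nonneg hE0 (by linarith)
          have h2 := mul_le_mul_of_nonneg_left hS1 this
          linarith
      _ = E * (((2 ^ n - 2 : ℕ) : ℝ) * σ + ρ) := by
          have hcast : ((2 ^ n - 1 : ℕ) : ℝ) = ((2 ^ n - 2 : ℕ) : ℝ) + 1 := by
            have : (2 ^ n - 1 : ℕ) = (2 ^ n - 2 : ℕ) + 1 := by omega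
            rw [this]; push_cast; ring
          rw [hcast]; ring
      _ = E * ((2 : ℕ) ^ (n - 1) : ℝ) ^ (n - k) := by rw [FsigTot]; ring
  -- put together
  have hmain := perr_decomp W δ (n := n) (k := k)
  have hC : (0:ℝ) ≤ 1 / (2:ℝ) ^ ((n - k) * n) := by positivity
  have hfinal : W.Perr n k δ ≤
      (1 / (2:ℝ) ^ ((n - k) * n)) * (ρ * ((2:ℝ) ^ n * W.Pdelta n δ))
        + (1 / (2:ℝ) ^ ((n - k) * n)) * (E * ((2 : ℕ) ^ (n - 1) : ℝ) ^ (n - k)) := by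
    calc W.Perr n k δ ≤ _ := hmain
      _ ≤ _ := by
        rw [mul_add]
        exact add_le_add (mul_le_mul_of_nonneg_left hSA hC)
          (mul_le_mul_of_nonneg_left hSB hC)
  refine le_trans hfinal (le_of_eq ?_)
  have hpne : ((2:ℝ) ^ n - 1) ≠ 0 := by
    have : (1:ℝ) < 2 ^ n := by
      have : (2:ℝ) ^ 1 ≤ 2 ^ n := pow_le_pow_right₀ (by norm_num) (by omega)
      norm_num at this ⊢
      linarith
    linarith
  have hρval : ρ = (2:ℝ) ^ ((n - k) * n) / ((2:ℝ) ^ n - 1) := by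
    have h := FrhoTot
    have hcast : ((2 ^ n - 1 : ℕ) : ℝ) = (2:ℝ) ^ n - 1 := by
      rw [Nat.cast_sub (by omega : 1 ≤ 2 ^ n)]; push_cast; ring
    rw [hcast] at h
    rw [eq_div_iff hpne]
    push_cast at h ⊢
    linarith
  congr 1
  · -- first term
    rw [hρval]
    have hrpow : (2:ℝ) ^ (-(n:ℝ)) = ((2:ℝ) ^ n)⁻¹ := by
      rw [Real.rpow_neg (by norm_num), Real.rpow_natCast]
    rw [hrpow]
    have h2pow : ((2:ℝ) ^ ((n - k) * n)) ≠ 0 := by positivity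
    have h2n' : ((2:ℝ) ^ n) ≠ 0 := by positivity
    field_simp
  · -- second term
    have hexp : (n - k) * n = (n - 1) * (n - k) + (n - k) := by
      have h1 : (n - 1) * (n - k) + (n - k) = ((n - 1) + 1) * (n - k) := by ring
      rw [h1, Nat.sub_add_cancel (by omega : 1 ≤ n), Nat.mul_comm]
    have hcastp : (((2 : ℕ) ^ (n - 1) : ℝ)) ^ (n - k) = (2:ℝ) ^ ((n - 1) * (n - k)) := by
      push_cast
      rw [← pow_mul]
    have harg : -(n : ℝ) * (W.CL - δ - (k : ℝ) / n * Real.log 2)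
        = (n : ℝ) * (W.condEnt + δ) - ((n - k : ℕ) : ℝ) * Real.log 2 := by
      rw [BIMC.CL]
      have hcast : ((n - k : ℕ) : ℝ) = (n : ℝ) - k := by
        rw [Nat.cast_sub hkn.le]
      rw [hcast]
      have hnne : (n : ℝ) ≠ 0 := by positivity
      field_simp
      ring
    rw [harg, Real.exp_sub, ← hEdef]
    have hexp2 : Real.exp (((n - k : ℕ) : ℝ) * Real.log 2) = (2:ℝ) ^ (n - k) := by
      rw [Real.exp_nat_mul, Real.exp_log (by norm_num : (0:ℝ) < 2)]
    rw [hexp2, hcastp]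
    rw [show ((2:ℝ) ^ ((n - k) * n)) = (2:ℝ) ^ ((n - 1) * (n - k)) * (2:ℝ) ^ (n - k) by
      rw [← pow_add, ← hexp]]
    have hpos1 : (0:ℝ) < (2:ℝ) ^ ((n - 1) * (n - k)) := by positivity
    have hpos2 : (0:ℝ) < (2:ℝ) ^ (n - k) := by positivity
    field_simp
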